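/- Let f : ℝ^d → ℝ be convex with L-Lipschitz gradient and a minimizer x*. Fix γ ∈ [0,1), set α = 1/L, c_t = 1 + γ/(4(1-γ)) + t/4, and β_t = (c_t - γ c_{t+1})/(1 + (1-γ) c_{t+1}). Run EMA-Nesterov with gradient-descent base step. Then for every T ≥ 1, f(x^T) - f(x*) ≤ (97 L)/(2 (1-γ)³ T²) · ‖x^0 - x*‖². -/

import Mathlib

open InnerProductSpace Set

variable {E : Type*} [NormedAddCommGroup E] [InnerProductSpace ℝ E] [CompleteSpace E]

local notation "⟪" x ", " y "⟫" => @inner ℝ _ _ x y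

lemma inner_gradient_eq (f : E → ℝ) (z v : E) : ⟪gradient f z, v⟫ = fderiv ℝ f z v := by
  rw [gradient]; exact InnerProductSpace.toDual_symm_apply

lemma line_hasDerivAt (f : E → ℝ) (hdiff : Differentiable ℝ f) (b v : E) (s : ℝ) :
    HasDerivAt (fun s : ℝ => f (b + s • v)) (fderiv ℝ f (b + s • v) v) s := by
  have h1 : HasDerivAt (fun s : ℝ => b + s • v) v s := by
    simpa using ((hasDerivAt_id s).smul_const v).const_add b
  exact (hdiff (b + s • v)).hasFDerivAt.comp_hasDerivAt s h1

lemma convex_grad_ineq (φ : E → ℝ) (hdiff : Differentiable ℝ φ)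
    (hconv : ConvexOn ℝ Set.univ φ) (a b : E) :
    φ a - φ b ≤ fderiv ℝ φ a (a - b) := by
  have hline : (⇑(AffineMap.lineMap b a : ℝ →ᵃ[ℝ] E)) = fun s : ℝ => b + s • (a - b) := by
    funext s; rw [AffineMap.lineMap_apply_module']; abel
  have hψconv : ConvexOn ℝ Set.univ (fun s : ℝ => φ (b + s • (a - b))) := by
    have := hconv.comp_affineMap (AffineMap.lineMap b a : ℝ →ᵃ[ℝ] E)
    rwa [hline, Set.preimage_univ] at this
  have hd1 := line_hasDerivAt φ hdiff b (a - b) 1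
  have hd0 := line_hasDerivAt φ hdiff b (a - b) 0
  have hslope := hψconv.slope_le_deriv (Set.mem_univ (0:ℝ)) (Set.mem_univ (1:ℝ))
    zero_lt_one hd1.differentiableAt
  rw [hd1.deriv] at hslope
  have hab : b + (1:ℝ) • (a - b) = a := by rw [one_smul]; abel
  rw [hab] at hslope
  have hb0 : b + (0:ℝ) • (a - b) = b := by rw [zero_smul, add_zero]
  have : slope (fun s : ℝ => φ (b + s • (a - b))) 0 1 = φ a - φ b := by
    rw [slope_def_field]; simp [hab, hb0]
  linarith [hslope, this.symm.le]

lemma smooth_upper_bound (f : E → ℝ) (L : ℝ) (hL : 0 < L) (hdiff : Differentiable ℝ f)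
    (hlip : ∀ z w, ‖gradient f z - gradient f w‖ ≤ L * ‖z - w‖) (a b : E) :
    f b ≤ f a + ⟪gradient f a, b - a⟫ + L / 2 * ‖b - a‖ ^ 2 := by
  set h : E → ℝ := fun w => L / 2 * ⟪w, w⟫ - f w with hh
  have hdiffh : Differentiable ℝ h :=
    (((differentiable_id.inner ℝ differentiable_id)).const_mul (L/2)).sub hdiff
  have hfd : ∀ z v : E, fderiv ℝ h z v = L * ⟪z, v⟫ - fderiv ℝ f z v := by
    intro z v
    have h1 : DifferentiableAt ℝ (fun w : E => ⟪w, w⟫) z :=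
      (differentiableAt_id.inner ℝ differentiableAt_id)
    have : fderiv ℝ h z v = (L/2) * fderiv ℝ (fun w : E => ⟪w, w⟫) z v - fderiv ℝ f z v := by
      rw [hh, fderiv_fun_sub (h1.const_mul _) (hdiff z)]
      simp only [ContinuousLinearMap.sub_apply]
      rw [fderiv_const_mul h1]
      simp
    have h2 : fderiv ℝ (fun w : E => ⟪w, w⟫) z v = ⟪z, v⟫ + ⟪v, z⟫ := by
      rw [fderiv_inner_apply ℝ differentiableAt_fun_id differentiableAt_fun_id, fderiv_fun_id]
      simp
    rw [this, h2, real_inner_comm v z]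
    ring
  have hconvh : ConvexOn ℝ Set.univ h := by
    refine ⟨convex_univ, fun a _ b _ p q hp hq hpq => ?_⟩
    set v : E := a - b with hv
    have hψd : ∀ s : ℝ, HasDerivAt (fun s : ℝ => h (b + s • v)) (fderiv ℝ h (b + s • v) v) s :=
      line_hasDerivAt h hdiffh b v
    have hψconv : ConvexOn ℝ Set.univ (fun s : ℝ => h (b + s • v)) := by
      apply Monotone.convexOn_univ_of_deriv (fun s => (hψd s).differentiableAt)
      intro s t hst
      rw [(hψd s).deriv, (hψd t).deriv, hfd, hfd]
      have hcs : ⟪gradient f (b + t • v) - gradient f (b + s • v), v⟫ ≤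
          (L * ((t - s) * ‖v‖)) * ‖v‖ := by
        calc ⟪gradient f (b + t • v) - gradient f (b + s • v), v⟫
            ≤ ‖gradient f (b + t • v) - gradient f (b + s • v)‖ * ‖v‖ := real_inner_le_norm _ _
          _ ≤ (L * ‖(b + t • v) - (b + s • v)‖) * ‖v‖ := by
              gcongr; exact hlip _ _
          _ = (L * ((t - s) * ‖v‖)) * ‖v‖ := by
              congr 2
              rw [show (b + t • v) - (b + s • v) = (t - s) • v by rw [sub_smul]; abel,
                norm_smul]
              simp [abs_of_nonneg (sub_nonneg.mpr hst)]
      have e1 : ⟪b + t • v, v⟫ - ⟪b + s • v, v⟫ = (t - s) * ⟪v, v⟫ := by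
        rw [inner_add_left, inner_add_left, real_inner_smul_left, real_inner_smul_left]; ring
      have e2 : ⟪gradient f (b + t • v) - gradient f (b + s • v), v⟫ =
          ⟪gradient f (b + t • v), v⟫ - ⟪gradient f (b + s • v), v⟫ := inner_sub_left _ _ _
      have e3 : ⟪v, v⟫ = ‖v‖ ^ 2 := real_inner_self_eq_norm_sq v
      have e7 : L * ⟪b + t • v, v⟫ - L * ⟪b + s • v, v⟫ = (L * ((t - s) * ‖v‖)) * ‖v‖ := by
        rw [inner_add_left, inner_add_left, real_inner_smul_left, real_inner_smul_left,
          real_inner_self_eq_norm_sq]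
        ring
      rw [← inner_gradient_eq f (b + t • v) v, ← inner_gradient_eq f (b + s • v) v]
      linarith [hcs, e2, e7]
    have key := hψconv.2 (Set.mem_univ (1:ℝ)) (Set.mem_univ (0:ℝ)) hp hq hpq
    simp only [smul_eq_mul, mul_one, mul_zero, add_zero] at key
    have h1 : b + p • v = p • a + q • b := by
      rw [hv, smul_sub]
      have hq1 : (q : ℝ) = 1 - p := by linarith
      rw [hq1, sub_smul, one_smul]; abel
    have ha' : b + (1:ℝ) • v = a := by rw [one_smul, hv]; abel
    have hb' : b + (0:ℝ) • v = b := by rw [zero_smul, add_zero]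
    rw [h1, ha', hb'] at key
    exact key
  have hkey := convex_grad_ineq h hdiffh hconvh a b
  rw [hfd] at hkey
  have hfa : h a = L / 2 * ⟪a, a⟫ - f a := rfl
  have hfb : h b = L / 2 * ⟪b, b⟫ - f b := rfl
  have hgr : ⟪gradient f a, b - a⟫ = fderiv ℝ f a (b - a) := inner_gradient_eq f a (b - a)
  have hfl : fderiv ℝ f a (a - b) = - fderiv ℝ f a (b - a) := by
    rw [show a - b = -(b - a) by abel, map_neg]
  have hnorm : ‖b - a‖ ^ 2 = ⟪b, b⟫ - 2 * ⟪b, a⟫ + ⟪a, a⟫ := by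
    rw [norm_sub_sq_real, real_inner_self_eq_norm_sq, real_inner_self_eq_norm_sq]
  have hinner : ⟪a, a - b⟫ = ⟪a, a⟫ - ⟪a, b⟫ := inner_sub_right _ _ _
  have hsym : ⟪a, b⟫ = ⟪b, a⟫ := real_inner_comm b a
  rw [hfa, hfb, hfl, hinner] at hkey
  nlinarith [hkey, hnorm, hsym, hgr]


noncomputable def nesTheta (u n : ℝ) : ℝ := (5 + 4*u + u*n)/4
noncomputable def nesRho (u n : ℝ) : ℝ := (1 + 3*u + u*n)*(5 + 4*u + u*n)/(4*u^2*(4+n)) - 1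
noncomputable def nesB (u n : ℝ) : ℝ := (1 + 3*u + u*n) * ((5 + 4*u + u*n)/4)^2 / (u^2 * (4+n))
noncomputable def nesA (u : ℝ) : ℕ → ℝ
  | 0 => nesTheta u 0 * nesRho u 0
  | (k+1) => nesB u (k : ℝ)

variable {u n : ℝ}

lemma nesTheta_pos (hu : 0 < u) (hn : 0 ≤ n) : 0 < nesTheta u n := by
  unfold nesTheta; nlinarith

lemma nesB_pos (hu : 0 < u) (hn : 0 ≤ n) : 0 < nesB u n := by
  unfold nesB
  have h1 : 0 < (1 + 3*u + u*n) := by nlinarith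
  have h2 : 0 < ((5 + 4*u + u*n)/4)^2 := by positivity
  have h3 : 0 < u^2 * (4+n) := by positivity
  positivity

lemma nesRho_nonneg (hu : 0 < u) (hu1 : u ≤ 1) (hn : 0 ≤ n) : 0 ≤ nesRho u n := by
  unfold nesRho
  rw [sub_nonneg, le_div_iff₀ (by positivity)]
  nlinarith [mul_nonneg (mul_nonneg hu.le hu.le) hn, mul_nonneg hu.le hn,
    mul_nonneg (mul_nonneg (mul_nonneg hu.le hu.le) hn) hn,
    mul_nonneg (mul_nonneg hu.le (sub_nonneg.2 hu1)) hn]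

lemma nesTheta_le (hu : 0 < u) (hu1 : u ≤ 1) (hn : 0 ≤ n) :
    nesTheta u n ≤ 1 + nesRho u n := by
  unfold nesTheta nesRho
  rw [show (1:ℝ) + ((1 + 3*u + u*n)*(5 + 4*u + u*n)/(4*u^2*(4+n)) - 1)
      = (1 + 3*u + u*n)*(5 + 4*u + u*n)/(4*u^2*(4+n)) by ring,
    div_le_div_iff₀ (by norm_num) (by positivity)]
  nlinarith [mul_nonneg (mul_nonneg hu.le (sub_nonneg.2 hu1)) hn, sq_nonneg (u*n),
    mul_nonneg (mul_nonneg (mul_nonneg hu.le hu.le) (sub_nonneg.2 hu1)) hn,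
    mul_nonneg (mul_nonneg (mul_nonneg hu.le hu.le) hn) hn,
    mul_nonneg (mul_nonneg (mul_nonneg (mul_nonneg hu.le hu.le) (sub_nonneg.2 hu1)) hn) hn,
    mul_nonneg hu.le hn, mul_pos hu hu]

lemma nesB_eq (hu : 0 < u) (hn : 0 ≤ n) :
    nesTheta u n * (1 + nesRho u n) = nesB u n := by
  unfold nesTheta nesRho nesB
  have h4 : (4:ℝ) + n ≠ 0 := by positivity
  field_simp
  ring

lemma nesA_step (hu : 0 < u) (hu1 : u ≤ 1) (hn : 0 ≤ n) :
    nesB u (n+1) ≤ nesB u n + nesTheta u (n+1) := by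
  unfold nesB nesTheta
  have h4 : (0:ℝ) < 4 + n := by linarith
  have h5 : (0:ℝ) < 4 + (n+1) := by linarith
  have hu2 : (0:ℝ) < u^2 := by positivity
  rw [div_add' _ _ _ (by positivity), div_le_div_iff₀ (by positivity) (by positivity)]
  nlinarith [mul_nonneg (mul_nonneg hu2.le hn) hn, mul_nonneg hu2.le hn,
    mul_nonneg (mul_nonneg (mul_nonneg hu2.le hu.le) hn) hn,
    mul_nonneg (mul_nonneg hu2.le hu.le) hn, mul_pos hu2 hu,
    mul_nonneg (mul_nonneg (mul_nonneg (mul_nonneg hu2.le hu.le) hn) hn) hn,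
    mul_nonneg (mul_nonneg hu2.le hu2.le) (sub_nonneg.2 hu1),
    sub_nonneg.2 hu1, mul_pos hu2 hu2, mul_nonneg (mul_nonneg hu2.le hu2.le) hn]

lemma nesA_lb (hu : 0 < u) (hu1 : u ≤ 1) (t : ℕ) :
    nesTheta u t * nesRho u t ≤ nesA u t := by
  cases t with
  | zero => simp [nesA]
  | succ k =>
    have hk : (0:ℝ) ≤ (k:ℝ) := Nat.cast_nonneg k
    have hk1 : (0:ℝ) ≤ ((k:ℝ)+1) := by linarith
    have h1 : nesTheta u ((k:ℝ)+1) * nesRho u ((k:ℝ)+1)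
        = nesB u ((k:ℝ)+1) - nesTheta u ((k:ℝ)+1) := by
      have := nesB_eq (n := (k:ℝ)+1) hu hk1
      ring_nf
      ring_nf at this
      linarith
    have h2 := nesA_step (n := (k:ℝ)) hu hu1 hk
    have : nesA u (k+1) = nesB u (k:ℝ) := rfl
    push_cast
    rw [this, h1]
    linarith

lemma nesA_final (hu : 0 < u) (hu1 : u ≤ 1) (hn : 0 ≤ n) :
    u^3*(n+1)^2*(nesA u 0 + 1) ≤ 97 * nesB u n := by
  have e : (0:ℝ) ≤ 1 - u := by linarith
  have hA0 : nesA u 0 = nesTheta u 0 * nesRho u 0 := rfl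
  unfold nesTheta nesRho nesB at *
  have h4 : (0:ℝ) < 4 + n := by linarith
  have hun : u ≠ 0 := ne_of_gt hu
  have h4n : (4:ℝ) + n ≠ 0 := ne_of_gt h4
  rw [hA0]
  have a1 : (0:ℝ) ≤ u^3*(1-u) := by positivity
  have a2 : (0:ℝ) ≤ u^3*(1-u)*n := by positivity
  have a3 : (0:ℝ) ≤ u^3*(1-u)*n^2 := by positivity
  have a4 : (0:ℝ) ≤ u^3*(1-u)*n^3 := by positivity
  have b1 : (0:ℝ) ≤ u^4*(1-u) := by positivity
  have b2 : (0:ℝ) ≤ u^4*(1-u)*n := by positivity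
  have b3 : (0:ℝ) ≤ u^4*(1-u)*n^2 := by positivity
  have b4 : (0:ℝ) ≤ u^4*(1-u)*n^3 := by positivity
  have c1 : (0:ℝ) ≤ u^6 := by positivity
  have c2 : (0:ℝ) ≤ u^6*n := by positivity
  have c3 : (0:ℝ) ≤ u^6*n^2 := by positivity
  have c4 : (0:ℝ) ≤ u^6*n^3 := by positivity
  have d1 : (0:ℝ) ≤ u := hu.le
  have d2 : (0:ℝ) ≤ u*n := by positivity
  have d3 : (0:ℝ) ≤ u^2 := by positivity
  have d4 : (0:ℝ) ≤ u^2*n := by positivity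
  have d5 : (0:ℝ) ≤ u^2*n^2 := by positivity
  have d6 : (0:ℝ) ≤ u^3 := by positivity
  have d7 : (0:ℝ) ≤ u^3*n := by positivity
  have d8 : (0:ℝ) ≤ u^3*n^2 := by positivity
  have d9 : (0:ℝ) ≤ u^3*n^3 := by positivity
  rw [show (97:ℝ) * ((1 + 3 * u + u * n) * ((5 + 4 * u + u * n) / 4) ^ 2 / (u ^ 2 * (4 + n)))
    = 97 * ((1 + 3 * u + u * n) * ((5 + 4 * u + u * n)) ^ 2) / (16 * (u ^ 2 * (4 + n))) by
      field_simp; ring]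
  rw [le_div_iff₀ (by positivity : (0:ℝ) < 16 * (u^2*(4+n)))]
  have hexp : u ^ 3 * (n + 1) ^ 2 *
      ((5 + 4 * u + u * 0) / 4 * ((1 + 3 * u + u * 0) * (5 + 4 * u + u * 0) / (4 * u ^ 2 * (4 + 0)) - 1) + 1)
      * (16 * (u ^ 2 * (4 + n)))
      = u^3 * ((n + 1) ^ 2 * (4 + n) * ((1+3*u)*(5+4*u)^2 - 16*u^2*(5+4*u) + 64*u^2))/4 := by
    field_simp
    ring
  rw [hexp]
  linarith [a1,a2,a3,a4,b1,b2,b3,b4,c1,c2,c3,c4,d1,d2,d3,d4,d5,d6,d7,d8,d9]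

lemma nesA_pos_of_one_le (hu : 0 < u) (T : ℕ) (hT : 1 ≤ T) : 0 < nesA u T := by
  cases T with
  | zero => omega
  | succ k => exact nesB_pos hu (Nat.cast_nonneg k)

lemma nesA0_nonneg (hu : 0 < u) (hu1 : u ≤ 1) : 0 ≤ nesA u 0 :=
  mul_nonneg (nesTheta_pos hu le_rfl).le (nesRho_nonneg hu hu1 le_rfl)

lemma nesA_final' (hu : 0 < u) (hu1 : u ≤ 1) (T : ℕ) (hT : 1 ≤ T) :
    u^3*(T:ℝ)^2*(nesA u 0 + 1) ≤ 97 * nesA u T := by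
  cases T with
  | zero => omega
  | succ k =>
    have : nesA u (k+1) = nesB u (k:ℝ) := rfl
    rw [this]
    push_cast
    exact nesA_final hu hu1 (Nat.cast_nonneg k)

open RealInnerProductSpace in
set_option maxHeartbeats 1000000 in
theorem ema_nesterov_convex_rate
    (d : ℕ) (f : EuclideanSpace ℝ (Fin d) → ℝ)
    (L : ℝ) (hL : 0 < L)
    (hdiff : Differentiable ℝ f)
    (hconv : ConvexOn ℝ Set.univ f)
    (hlip : ∀ z w, ‖gradient f z - gradient f w‖ ≤ L * ‖z - w‖)
    (xstar : EuclideanSpace ℝ (Fin d)) (hmin : ∀ z, f xstar ≤ f z)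
    (γ : ℝ) (hγ0 : 0 ≤ γ) (hγ1 : γ < 1)
    (α : ℝ) (hα : α = 1 / L)
    (c β : ℕ → ℝ)
    (hc : ∀ t : ℕ, c t = 1 + γ / (4 * (1 - γ)) + (t : ℝ) / 4)
    (hβ : ∀ t : ℕ, β t = (c t - γ * c (t + 1)) / (1 + (1 - γ) * c (t + 1)))
    (x m : ℕ → EuclideanSpace ℝ (Fin d))
    (hm0 : m 0 = 0)
    (hx : ∀ t, x (t + 1) = (x t + β t • m t) - α • gradient f (x t + β t • m t))
    (hm : ∀ t, m (t + 1) = γ • m t + (1 - γ) • (x (t + 1) - x t)) :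
    ∀ T : ℕ, 1 ≤ T → f (x T) - f xstar ≤
      97 * L / (2 * (1 - γ) ^ 3 * (T : ℝ) ^ 2) * ‖x 0 - xstar‖ ^ 2 := by
  intro T hT
  set u : ℝ := 1 - γ with hudef
  have hu0 : 0 < u := by rw [hudef]; linarith
  have hu1 : u ≤ 1 := by rw [hudef]; linarith
  have hγu : γ = 1 - u := by rw [hudef]; ring
  have hune : u ≠ 0 := ne_of_gt hu0
  -- analytic facts
  have key1 : ∀ a w : EuclideanSpace ℝ (Fin d), f a - f w ≤ ⟪gradient f a, a - w⟫_ℝ := by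
    intro a w
    have h := convex_grad_ineq f hdiff hconv a w
    rwa [← inner_gradient_eq] at h
  have key2 : ∀ a b : EuclideanSpace ℝ (Fin d),
      f b ≤ f a + ⟪gradient f a, b - a⟫_ℝ + L / 2 * ‖b - a‖ ^ 2 :=
    smooth_upper_bound f L hL hdiff hlip
  have hG0 : gradient f xstar = 0 := by
    have hmin' : IsLocalMin f xstar := Filter.Eventually.of_forall hmin
    rw [gradient, hmin'.fderiv_eq_zero]; simp
  have hF0 : f (x 0) - f xstar ≤ L / 2 * ‖x 0 - xstar‖ ^ 2 := by
    have h := key2 xstar (x 0)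
    rw [hG0] at h
    simp only [inner_zero_left] at h
    linarith
  have hFnn : ∀ t : ℕ, 0 ≤ f (x t) - f xstar := fun t => by linarith [hmin (x t)]
  -- scalar sequence facts
  have hcval : ∀ t : ℕ, c t = (1 + 3*u + u*(t:ℝ))/(4*u) := by
    intro t; rw [hc t, hγu]; field_simp; ring
  have hθγ : ∀ t : ℕ, 1 + (1-γ)*c (t+1) = nesTheta u (t:ℝ) := by
    intro t; rw [hcval (t+1), hγu]; unfold nesTheta; push_cast; field_simp; ring
  have hθpos : ∀ t : ℕ, 0 < nesTheta u (t:ℝ) := fun t => nesTheta_pos hu0 (Nat.cast_nonneg t)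
  have hβval : ∀ t : ℕ, β t = (u*(4+(t:ℝ))/4) / nesTheta u (t:ℝ) := by
    intro t
    rw [hβ t, hθγ t]
    congr 1
    rw [hcval t, hcval (t+1), hγu]
    push_cast
    field_simp
    ring
  have hρβ : ∀ t : ℕ, c t = (1 + nesRho u (t:ℝ)) * β t := by
    intro t
    rw [hβval t, hcval t]
    unfold nesRho nesTheta
    have h4n : (4:ℝ) + (t:ℝ) ≠ 0 := by positivity
    have h5 : (5 + 4*u + u*(t:ℝ)) ≠ 0 := by positivity
    field_simp
    ring
  -- z recursion
  have hβθ : ∀ t : ℕ, (1 + (1-γ)*c (t+1)) * β t = c t - γ * c (t+1) := by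
    intro t
    rw [hβ t]
    rw [mul_div_cancel₀]
    rw [hθγ t]
    exact (hθpos t).ne'
  have hzstep : ∀ t : ℕ, x (t+1) + c (t+1) • m (t+1)
      = (x t + c t • m t) - (α * nesTheta u (t:ℝ)) • gradient f (x t + β t • m t) := by
    intro t
    rw [← hθγ t, hm t, hx t]
    match_scalars
    · ring
    · linear_combination hβθ t
    · ring
  -- one-step Lyapunov decrease
  have hstep : ∀ t : ℕ,
      nesA u (t+1) * (f (x (t+1)) - f xstar)
        + L/2 * ‖(x (t+1) + c (t+1) • m (t+1)) - xstar‖^2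
      ≤ nesA u t * (f (x t) - f xstar)
        + L/2 * ‖(x t + c t • m t) - xstar‖^2 := by
    intro t
    have hn : (0:ℝ) ≤ (t:ℝ) := Nat.cast_nonneg t
    set Y := x t + β t • m t with hY
    set G := gradient f Y with hG
    set Z := x t + c t • m t with hZ
    set θ := nesTheta u (t:ℝ) with hθ
    set ρ := nesRho u (t:ℝ) with hρ
    have hθ0 : 0 < θ := hθpos t
    have hρ0 : 0 ≤ ρ := nesRho_nonneg hu0 hu1 hn
    have hθρ : θ ≤ 1 + ρ := nesTheta_le hu0 hu1 hn
    have hAub : nesA u (t+1) = θ * (1 + ρ) := by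
      show nesB u (t:ℝ) = θ * (1 + ρ)
      rw [hθ, hρ, ← nesB_eq hu0 hn]
    have hAlb : θ * ρ ≤ nesA u t := nesA_lb hu0 hu1 t
    have hxt1 : x (t+1) = Y - α • G := hx t
    have hαpos : 0 < α := by rw [hα]; positivity
    -- descent step
    have e1 : ⟪G, (x (t+1)) - Y⟫_ℝ = -α * ‖G‖^2 := by
      rw [hxt1, show Y - α • G - Y = -(α • G) from by abel, inner_neg_right,
        real_inner_smul_right, real_inner_self_eq_norm_sq]
      ring
    have e2 : ‖x (t+1) - Y‖^2 = α^2 * ‖G‖^2 := by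
      rw [hxt1, show Y - α • G - Y = -(α • G) from by abel, norm_neg, norm_smul, mul_pow, Real.norm_eq_abs,
        sq_abs]
    have hdes : f (x (t+1)) ≤ f Y - 1/(2*L) * ‖G‖^2 := by
      have h := key2 Y (x (t+1))
      rw [e1, e2] at h
      have h2 : -α*‖G‖^2 + L/2*(α^2*‖G‖^2) = -(1/(2*L))*‖G‖^2 := by
        rw [hα]; field_simp; ring
      linarith [h, h2]
    -- convexity bounds
    have hcx : f Y - f (x t) ≤ ⟪G, Y - x t⟫_ℝ := key1 Y (x t)
    have hcs : f Y - f xstar ≤ ⟪G, Y - xstar⟫_ℝ := key1 Y xstar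
    have hzy : Z - Y = ρ • (Y - x t) := by
      rw [hZ, hY]
      match_scalars
      · ring
      · linear_combination (hρβ t)
    have hinner : ρ * (f Y - f (x t)) + (f Y - f xstar) ≤ ⟪G, Z - xstar⟫_ℝ := by
      have hsplit : ⟪G, Z - xstar⟫_ℝ = ⟪G, Z - Y⟫_ℝ + ⟪G, Y - xstar⟫_ℝ := by
        rw [← inner_add_right]
        congr 1
        abel
      have h2 : ⟪G, Z - Y⟫_ℝ = ρ * ⟪G, Y - x t⟫_ℝ := by rw [hzy, real_inner_smul_right]
      have h3 : ρ * (f Y - f (x t)) ≤ ρ * ⟪G, Y - x t⟫_ℝ := mul_le_mul_of_nonneg_left hcx hρ0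
      linarith [hsplit, h2, h3, hcs]
    -- norm expansion
    have hne : ‖(x (t+1) + c (t+1) • m (t+1)) - xstar‖^2
        = ‖Z - xstar‖^2 - 2*(α*θ)*⟪G, Z - xstar⟫_ℝ + (α*θ)^2*‖G‖^2 := by
      rw [hzstep t, show Z - (α * θ) • G - xstar = (Z - xstar) - (α * θ) • G from by abel,
        norm_sub_sq_real, real_inner_smul_right, real_inner_comm G (Z - xstar), norm_smul,
        mul_pow, Real.norm_eq_abs, sq_abs]
      ring
    -- assemble
    rw [hAub, hne, hα]
    have hfy' : f (x (t+1)) - f xstar + 1/(2*L)*‖G‖^2 ≤ f Y - f xstar := by linarith [hdes]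
    have hs0 : (0:ℝ) ≤ ‖G‖^2 := by positivity
    have hh1 : θ * (ρ * (f Y - f (x t)) + (f Y - f xstar)) ≤ θ * ⟪G, Z - xstar⟫_ℝ :=
      mul_le_mul_of_nonneg_left hinner hθ0.le
    have hh2 : (θ*(1+ρ)) * (f (x (t+1)) - f xstar + 1/(2*L)*‖G‖^2)
        ≤ (θ*(1+ρ)) * (f Y - f xstar) :=
      mul_le_mul_of_nonneg_left hfy' (by positivity)
    have hh3 : (θ*ρ) * (f (x t) - f xstar) ≤ nesA u t * (f (x t) - f xstar) :=
      mul_le_mul_of_nonneg_right hAlb (hFnn t)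
    have hh4 : (θ*θ) * (1/(2*L)*‖G‖^2) ≤ (θ*(1+ρ)) * (1/(2*L)*‖G‖^2) :=
      mul_le_mul_of_nonneg_right (mul_le_mul_of_nonneg_left hθρ hθ0.le) (by positivity)
    have hLne : (L:ℝ) ≠ 0 := ne_of_gt hL
    have hexp : L/2 * (‖Z - xstar‖^2 - 2*((1/L)*θ)*⟪G, Z - xstar⟫_ℝ + ((1/L)*θ)^2*‖G‖^2)
        = L/2 * ‖Z - xstar‖^2 - θ*⟪G, Z - xstar⟫_ℝ + (θ*θ)*(1/(2*L)*‖G‖^2) := by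
      field_simp
    linarith [hh1, hh2, hh3, hh4, hexp]
  -- telescoping
  have hmono : ∀ t : ℕ,
      nesA u t * (f (x t) - f xstar) + L/2 * ‖(x t + c t • m t) - xstar‖^2
      ≤ nesA u 0 * (f (x 0) - f xstar) + L/2 * ‖(x 0 + c 0 • m 0) - xstar‖^2 := by
    intro t
    induction t with
    | zero => exact le_rfl
    | succ k ih => exact (hstep k).trans ih
  have hz0 : x 0 + c 0 • m 0 = x 0 := by rw [hm0, smul_zero, add_zero]
  have hAT : 0 < nesA u T := nesA_pos_of_one_le hu0 T hT
  have hA0 : 0 ≤ nesA u 0 := nesA0_nonneg hu0 hu1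
  have hR : (0:ℝ) ≤ ‖x 0 - xstar‖^2 := by positivity
  have h1 : nesA u T * (f (x T) - f xstar)
      ≤ (nesA u 0 + 1) * (L/2 * ‖x 0 - xstar‖^2) := by
    have h2 := hmono T
    rw [hz0] at h2
    have h3 : (0:ℝ) ≤ L/2 * ‖(x T + c T • m T) - xstar‖^2 := by positivity
    have h4 : nesA u 0 * (f (x 0) - f xstar) ≤ nesA u 0 * (L/2 * ‖x 0 - xstar‖^2) :=
      mul_le_mul_of_nonneg_left hF0 hA0
    nlinarith [h2, h3, h4]
  have hS4 := nesA_final' hu0 hu1 T hT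
  have hTpos : (0:ℝ) < (T:ℝ) := by exact_mod_cast Nat.lt_of_lt_of_le Nat.zero_lt_one hT
  have hden : (0:ℝ) < 2 * u ^ 3 * (T:ℝ)^2 := by positivity
  rw [div_mul_eq_mul_div, le_div_iff₀ hden]
  have hg := mul_le_mul_of_nonneg_right h1 hden.le
  have hs := mul_le_mul_of_nonneg_right hS4 (mul_nonneg hL.le hR)
  nlinarith [hg, hs, hAT]
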